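/- With τ = √N·Δ for N-QAM with minimum distance Δ, if u ∈ ℂ^K has every entry a QAM symbol and l ∈ (ℤ + jℤ)^K is a nonzero Gaussian-integer vector, then ‖u + τ·l‖² > ‖u‖². -/

import Mathlib

open Complex

lemma qam_key (Δ τ x : ℝ) (hΔ : 0 < Δ) (hx : 2 * |x| ≤ τ - Δ) (m : ℤ) :
    x ^ 2 ≤ (x + τ * m) ^ 2 ∧ (m ≠ 0 → x ^ 2 < (x + τ * m) ^ 2) := by
  have habs := abs_le.mp (le_refl |x|)
  have hτ : 0 < τ := by have := abs_nonneg x; linarith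
  rcases lt_trichotomy m 0 with h | h | h
  · have hm : (m : ℝ) ≤ -1 := by exact_mod_cast (by omega : m ≤ -1)
    have p1 : τ ≤ -(τ * m) := by nlinarith
    have p2 : Δ ≤ -(2 * x + τ * m) := by nlinarith [habs.2]
    have p3 : τ * Δ ≤ (-(τ * m)) * (-(2 * x + τ * m)) :=
      mul_le_mul p1 p2 hΔ.le (by linarith)
    have hstrict : x ^ 2 < (x + τ * m) ^ 2 := by nlinarith [mul_pos hτ hΔ]
    exact ⟨hstrict.le, fun _ => hstrict⟩
  · subst h; simp
  · have hm : (1 : ℝ) ≤ (m : ℝ) := by exact_mod_cast (by omega : 1 ≤ m)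
    have p1 : τ ≤ τ * m := by nlinarith
    have p2 : Δ ≤ 2 * x + τ * m := by nlinarith [habs.1]
    have p3 : τ * Δ ≤ (τ * m) * (2 * x + τ * m) :=
      mul_le_mul p1 p2 hΔ.le (by linarith)
    have hstrict : x ^ 2 < (x + τ * m) ^ 2 := by nlinarith [mul_pos hτ hΔ]
    exact ⟨hstrict.le, fun _ => hstrict⟩

/-- with `τ = √N·Δ = n·Δ` for square `N`-QAM (`N = n²`) of minimum
distance `Δ`, if every entry of `u` is a QAM symbol (real and imaginary parts odd
multiples of `Δ/2` of absolute value at most `(n-1)Δ/2`) and `l` is a nonzero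
Gaussian-integer vector, then `‖u + τl‖² > ‖u‖²`. -/
theorem qam_perturbed_vector_power (K n N : ℕ) (hn : 2 ≤ n) (hN : N = n ^ 2)
    (Δ : ℝ) (hΔ : 0 < Δ) (τ : ℝ) (hτ : τ = (n : ℝ) * Δ)
    (u : Fin K → ℂ)
    (hu : ∀ k, (∃ a : ℤ, (u k).re = (2 * (a : ℝ) + 1) * (Δ / 2)) ∧
               (∃ b : ℤ, (u k).im = (2 * (b : ℝ) + 1) * (Δ / 2)) ∧
               |(u k).re| ≤ ((n : ℝ) - 1) * Δ / 2 ∧ |(u k).im| ≤ ((n : ℝ) - 1) * Δ / 2)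
    (l : Fin K → ℂ) (hl : ∀ k, ∃ a b : ℤ, l k = (a : ℂ) + (b : ℂ) * Complex.I)
    (hl0 : l ≠ 0) :
    ∑ k, ‖u k + (τ : ℂ) * l k‖ ^ 2 > ∑ k, ‖u k‖ ^ 2 := by
  -- pick a coordinate where l is nonzero
  obtain ⟨k₀, hk₀⟩ : ∃ k, l k ≠ 0 := by
    by_contra h
    push_neg at h
    exact hl0 (funext h)
  have hbound : ∀ k, 2 * |(u k).re| ≤ τ - Δ ∧ 2 * |(u k).im| ≤ τ - Δ := by
    intro k
    obtain ⟨_, _, hre, him⟩ := hu k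
    have hn' : (2 : ℝ) ≤ (n : ℝ) := by exact_mod_cast hn
    constructor <;> [nlinarith; nlinarith]
  have hterm : ∀ k, ‖u k‖ ^ 2 ≤ ‖u k + (τ : ℂ) * l k‖ ^ 2 ∧
      (l k ≠ 0 → ‖u k‖ ^ 2 < ‖u k + (τ : ℂ) * l k‖ ^ 2) := by
    intro k
    obtain ⟨a, b, hab⟩ := hl k
    obtain ⟨h1, h2⟩ := hbound k
    have hre := qam_key Δ τ (u k).re hΔ h1 a
    have him := qam_key Δ τ (u k).im hΔ h2 b
    have hA : ‖u k‖ ^ 2 = (u k).re ^ 2 + (u k).im ^ 2 := by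
      rw [Complex.sq_norm, Complex.normSq_apply]; ring
    have hB : ‖u k + (τ : ℂ) * l k‖ ^ 2 =
        ((u k).re + τ * a) ^ 2 + ((u k).im + τ * b) ^ 2 := by
      rw [Complex.sq_norm, Complex.normSq_apply, hab]
      simp [Complex.add_re, Complex.add_im, Complex.mul_re, Complex.mul_im]
      ring
    rw [hA, hB]
    constructor
    · exact add_le_add hre.1 him.1
    · intro hlk
      have hab0 : a ≠ 0 ∨ b ≠ 0 := by
        by_contra h
        push_neg at h
        exact hlk (by rw [hab, h.1, h.2]; simp)
      rcases hab0 with ha | hb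
      · exact add_lt_add_of_lt_of_le (hre.2 ha) him.1
      · exact add_lt_add_of_le_of_lt hre.1 (him.2 hb)
  exact Finset.sum_lt_sum (fun k _ => (hterm k).1) ⟨k₀, Finset.mem_univ _, (hterm k₀).2 hk₀⟩
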